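/- Let (B, ⊤, m, u, Δ, ε) be a locality bialgebra and (A, ⊤_A, ·) a commutative locality algebra. If φ, ψ : B → A are independent locality linear maps that are each locality multiplicative (f(cd) = f(c)f(d) for (c, d) ∈ ⊤), then their convolution product φ ⋆ ψ is locality multiplicative. If moreover B is connected, the convolution inverse φ^{⋆(−1)} of a locality algebra homomorphism φ is again a locality algebra homomorphism. -/
import Mathlib


open TensorProduct

/-- Two linear maps `φ, ψ : B → A` are independent with respect to locality
relations `rB`, `rA` if `(φ × ψ)(⊤_B) ⊆ ⊤_A`. -/
def LocIndep {K B A : Type*} [Field K] [AddCommGroup B] [Module K B]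
    [CommRing A] [Algebra K A] (rB : B → B → Prop) (rA : A → A → Prop)
    (φ ψ : B →ₗ[K] A) : Prop :=
  ∀ c d : B, rB c d → rA (φ c) (ψ d)

/-- The convolution product `φ ⋆ ψ = m ∘ (φ ⊗ ψ) ∘ Δ`. -/
noncomputable def locConv {K B A : Type*} [Field K] [CommRing B] [Bialgebra K B]
    [CommRing A] [Algebra K A] (φ ψ : B →ₗ[K] A) : B →ₗ[K] A :=
  (LinearMap.mul' K A) ∘ₗ (TensorProduct.map φ ψ) ∘ₗ Coalgebra.comul

namespace S19

variable {K B A : Type*} [Field K] [CommRing B] [Bialgebra K B]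
    [CommRing A] [Algebra K A]

/-- The unit of the convolution algebra. -/
noncomputable def eB : B →ₗ[K] A := (Algebra.linearMap K A) ∘ₗ Coalgebra.counit

/-- Comultiplication on `B ⊗ B`. -/
noncomputable def Δ₂ : B ⊗[K] B →ₗ[K] (B ⊗[K] B) ⊗[K] (B ⊗[K] B) :=
  (TensorProduct.tensorTensorTensorComm K B B B B).toLinearMap ∘ₗ
    TensorProduct.map Coalgebra.comul Coalgebra.comul

/-- Convolution product on linear maps `B ⊗ B → A`. -/
noncomputable def conv₂ (f g : B ⊗[K] B →ₗ[K] A) : B ⊗[K] B →ₗ[K] A :=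
  (LinearMap.mul' K A) ∘ₗ (TensorProduct.map f g) ∘ₗ Δ₂

/-- The unit of the convolution algebra on `B ⊗ B → A`. -/
noncomputable def e₂ : B ⊗[K] B →ₗ[K] A :=
  (LinearMap.mul' K A) ∘ₗ TensorProduct.map eB eB

lemma Δ₂_tmul (x y : B) :
    (Δ₂ (x ⊗ₜ[K] y) : (B ⊗[K] B) ⊗[K] (B ⊗[K] B)) =
      TensorProduct.tensorTensorTensorComm K B B B B
        (Coalgebra.comul x ⊗ₜ[K] Coalgebra.comul y) := rfl

lemma e₂_tmul (x y : B) :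
    (e₂ : B ⊗[K] B →ₗ[K] A) (x ⊗ₜ[K] y)
      = (eB : B →ₗ[K] A) x * (eB : B →ₗ[K] A) y := rfl

lemma conv₂_apply (f g : B ⊗[K] B →ₗ[K] A) (s : B ⊗[K] B) :
    conv₂ f g s = LinearMap.mul' K A (TensorProduct.map f g (Δ₂ s)) := rfl

lemma conv₂_mulcomp (f g : B →ₗ[K] A) (h : locConv f g = (eB : B →ₗ[K] A)) :
    conv₂ (f ∘ₗ LinearMap.mul' K B) (g ∘ₗ LinearMap.mul' K B) = (e₂ : B ⊗[K] B →ₗ[K] A) := by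
  apply TensorProduct.ext'
  intro x y
  have key : ∀ u v : B ⊗[K] B,
      LinearMap.mul' K A (TensorProduct.map (f ∘ₗ LinearMap.mul' K B) (g ∘ₗ LinearMap.mul' K B)
        (TensorProduct.tensorTensorTensorComm K B B B B (u ⊗ₜ[K] v))) =
      LinearMap.mul' K A (TensorProduct.map f g (u * v)) := by
    intro u v
    induction u using TensorProduct.induction_on with
    | zero => simp only [tmul_zero, zero_tmul, LinearEquiv.map_zero, LinearMap.map_zero, zero_mul, mul_zero]
    | tmul a b =>
      induction v using TensorProduct.induction_on with
      | zero => simp only [tmul_zero, zero_tmul, LinearEquiv.map_zero, LinearMap.map_zero, zero_mul, mul_zero]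
      | tmul a' b' =>
        simp [TensorProduct.tensorTensorTensorComm_tmul, Algebra.TensorProduct.tmul_mul_tmul]
      | add v₁ v₂ ih₁ ih₂ => simp only [tmul_add, map_add, mul_add, ih₁, ih₂]
    | add u₁ u₂ ih₁ ih₂ => simp only [add_tmul, map_add, add_mul, ih₁, ih₂]
  rw [conv₂_apply, Δ₂_tmul, key, ← Bialgebra.comul_mul, e₂_tmul]
  have := congrFun (congrArg (fun (F : B →ₗ[K] A) => (F : B → A)) h) (x * y)
  simp only [locConv] at this
  rw [LinearMap.comp_apply, LinearMap.comp_apply] at this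
  rw [this]
  simp [eB, Bialgebra.counit_mul, map_mul]

lemma conv₂_mulmap (f g : B →ₗ[K] A) (h : locConv f g = (eB : B →ₗ[K] A)) :
    conv₂ ((LinearMap.mul' K A) ∘ₗ TensorProduct.map f f)
      ((LinearMap.mul' K A) ∘ₗ TensorProduct.map g g) = (e₂ : B ⊗[K] B →ₗ[K] A) := by
  apply TensorProduct.ext'
  intro x y
  have key : ∀ u v : B ⊗[K] B,
      LinearMap.mul' K A (TensorProduct.map ((LinearMap.mul' K A) ∘ₗ TensorProduct.map f f)
        ((LinearMap.mul' K A) ∘ₗ TensorProduct.map g g)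
        (TensorProduct.tensorTensorTensorComm K B B B B (u ⊗ₜ[K] v))) =
      LinearMap.mul' K A (TensorProduct.map f g u) *
        LinearMap.mul' K A (TensorProduct.map f g v) := by
    intro u v
    induction u using TensorProduct.induction_on with
    | zero => simp only [tmul_zero, zero_tmul, LinearEquiv.map_zero, LinearMap.map_zero, zero_mul, mul_zero]
    | tmul a b =>
      induction v using TensorProduct.induction_on with
      | zero => simp only [tmul_zero, zero_tmul, LinearEquiv.map_zero, LinearMap.map_zero, zero_mul, mul_zero]
      | tmul a' b' =>
        simp only [TensorProduct.tensorTensorTensorComm_tmul, TensorProduct.map_tmul,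
          LinearMap.comp_apply, LinearMap.mul'_apply]
        ring
      | add v₁ v₂ ih₁ ih₂ => simp only [tmul_add, map_add, mul_add, ih₁, ih₂]
    | add u₁ u₂ ih₁ ih₂ => simp only [add_tmul, map_add, add_mul, ih₁, ih₂]
  rw [conv₂_apply, Δ₂_tmul, key, e₂_tmul]
  have hx := congrFun (congrArg (fun (F : B →ₗ[K] A) => (F : B → A)) h) x
  have hy := congrFun (congrArg (fun (F : B →ₗ[K] A) => (F : B → A)) h) y
  simp only [locConv, LinearMap.comp_apply] at hx hy
  rw [hx, hy]

lemma conv₂_unit_left (T : B ⊗[K] B →ₗ[K] A) : conv₂ e₂ T = T := by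
  apply TensorProduct.ext'
  intro x y
  have key : ∀ u v : B ⊗[K] B,
      LinearMap.mul' K A (TensorProduct.map (e₂ : B ⊗[K] B →ₗ[K] A) T
        (TensorProduct.tensorTensorTensorComm K B B B B (u ⊗ₜ[K] v))) =
      T ((TensorProduct.lid K B) (LinearMap.rTensor B (Coalgebra.counit (R := K)) u) ⊗ₜ[K]
         (TensorProduct.lid K B) (LinearMap.rTensor B (Coalgebra.counit (R := K)) v)) := by
    intro u v
    induction u using TensorProduct.induction_on with
    | zero => simp only [tmul_zero, zero_tmul, LinearEquiv.map_zero, LinearMap.map_zero, zero_mul, mul_zero]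
    | tmul a b =>
      induction v using TensorProduct.induction_on with
      | zero => simp only [tmul_zero, zero_tmul, LinearEquiv.map_zero, LinearMap.map_zero, zero_mul, mul_zero]
      | tmul a' b' =>
        simp only [TensorProduct.tensorTensorTensorComm_tmul, TensorProduct.map_tmul,
          LinearMap.mul'_apply, LinearMap.rTensor_tmul, TensorProduct.lid_tmul]
        rw [e₂_tmul, show ((Coalgebra.counit a : K) • b) ⊗ₜ[K] ((Coalgebra.counit a' : K) • b')
            = ((Coalgebra.counit a : K) * Coalgebra.counit a') • (b ⊗ₜ[K] b') by
          rw [← smul_tmul', tmul_smul, smul_smul],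
          map_smul]
        simp [eB, Algebra.smul_def, map_mul, mul_assoc]
      | add v₁ v₂ ih₁ ih₂ => simp only [add_tmul, tmul_add, LinearEquiv.map_add, LinearMap.map_add, mul_add, add_mul, ih₁, ih₂]
    | add u₁ u₂ ih₁ ih₂ => simp only [add_tmul, tmul_add, LinearEquiv.map_add, LinearMap.map_add, mul_add, add_mul, ih₁, ih₂]
  rw [conv₂_apply, Δ₂_tmul, key]
  simp [Coalgebra.rTensor_counit_comul]

lemma conv₂_unit_right (T : B ⊗[K] B →ₗ[K] A) : conv₂ T e₂ = T := by
  apply TensorProduct.ext'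
  intro x y
  have key : ∀ u v : B ⊗[K] B,
      LinearMap.mul' K A (TensorProduct.map T (e₂ : B ⊗[K] B →ₗ[K] A)
        (TensorProduct.tensorTensorTensorComm K B B B B (u ⊗ₜ[K] v))) =
      T ((TensorProduct.rid K B) (LinearMap.lTensor B (Coalgebra.counit (R := K)) u) ⊗ₜ[K]
         (TensorProduct.rid K B) (LinearMap.lTensor B (Coalgebra.counit (R := K)) v)) := by
    intro u v
    induction u using TensorProduct.induction_on with
    | zero => simp only [tmul_zero, zero_tmul, LinearEquiv.map_zero, LinearMap.map_zero, zero_mul, mul_zero]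
    | tmul a b =>
      induction v using TensorProduct.induction_on with
      | zero => simp only [tmul_zero, zero_tmul, LinearEquiv.map_zero, LinearMap.map_zero, zero_mul, mul_zero]
      | tmul a' b' =>
        simp only [TensorProduct.tensorTensorTensorComm_tmul, TensorProduct.map_tmul,
          LinearMap.mul'_apply, LinearMap.lTensor_tmul, TensorProduct.rid_tmul]
        rw [e₂_tmul, show ((Coalgebra.counit b : K) • a) ⊗ₜ[K] ((Coalgebra.counit b' : K) • a')
            = ((Coalgebra.counit b : K) * Coalgebra.counit b') • (a ⊗ₜ[K] a') by
          rw [← smul_tmul', tmul_smul, smul_smul],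
          map_smul]
        rw [Algebra.smul_def]
        simp [eB, Algebra.smul_def, map_mul]
        ring
      | add v₁ v₂ ih₁ ih₂ => simp only [add_tmul, tmul_add, LinearEquiv.map_add, LinearMap.map_add, mul_add, add_mul, ih₁, ih₂]
    | add u₁ u₂ ih₁ ih₂ => simp only [add_tmul, tmul_add, LinearEquiv.map_add, LinearMap.map_add, mul_add, add_mul, ih₁, ih₂]
  rw [conv₂_apply, Δ₂_tmul, key]
  simp [Coalgebra.lTensor_counit_comul]

lemma conv_assoc_aux {C : Type*} [AddCommGroup C] [Module K C]
    (D : C →ₗ[K] C ⊗[K] C)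
    (hco : ∀ c : C, (LinearMap.rTensor C D) (D c) =
      (TensorProduct.assoc K C C C).symm ((LinearMap.lTensor C D) (D c)))
    (f g h : C →ₗ[K] A) :
    (LinearMap.mul' K A) ∘ₗ
        TensorProduct.map ((LinearMap.mul' K A) ∘ₗ TensorProduct.map f g ∘ₗ D) h ∘ₗ D =
      (LinearMap.mul' K A) ∘ₗ
        TensorProduct.map f ((LinearMap.mul' K A) ∘ₗ TensorProduct.map g h ∘ₗ D) ∘ₗ D := by
  apply LinearMap.ext
  intro c
  have h1 : ∀ w : C ⊗[K] C,
      LinearMap.mul' K A (TensorProduct.map ((LinearMap.mul' K A) ∘ₗ TensorProduct.map f g ∘ₗ D) h w) =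
      LinearMap.mul' K A (TensorProduct.map ((LinearMap.mul' K A) ∘ₗ TensorProduct.map f g) h
        (LinearMap.rTensor C D w)) := by
    intro w
    induction w using TensorProduct.induction_on with
    | zero => simp only [LinearMap.map_zero]
    | tmul u v => simp only [TensorProduct.map_tmul, LinearMap.rTensor_tmul, LinearMap.comp_apply]
    | add w₁ w₂ ih₁ ih₂ => simp only [LinearMap.map_add, ih₁, ih₂]
  have h3 : ∀ w : C ⊗[K] C,
      LinearMap.mul' K A (TensorProduct.map f ((LinearMap.mul' K A) ∘ₗ TensorProduct.map g h ∘ₗ D) w) =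
      LinearMap.mul' K A (TensorProduct.map f ((LinearMap.mul' K A) ∘ₗ TensorProduct.map g h)
        (LinearMap.lTensor C D w)) := by
    intro w
    induction w using TensorProduct.induction_on with
    | zero => simp only [LinearMap.map_zero]
    | tmul u v => simp only [TensorProduct.map_tmul, LinearMap.lTensor_tmul, LinearMap.comp_apply]
    | add w₁ w₂ ih₁ ih₂ => simp only [LinearMap.map_add, ih₁, ih₂]
  have h2 : ∀ t : C ⊗[K] (C ⊗[K] C),
      LinearMap.mul' K A (TensorProduct.map ((LinearMap.mul' K A) ∘ₗ TensorProduct.map f g) h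
        ((TensorProduct.assoc K C C C).symm t)) =
      LinearMap.mul' K A (TensorProduct.map f ((LinearMap.mul' K A) ∘ₗ TensorProduct.map g h) t) := by
    intro t
    induction t using TensorProduct.induction_on with
    | zero => simp only [LinearEquiv.map_zero, LinearMap.map_zero]
    | tmul a m =>
      induction m using TensorProduct.induction_on with
      | zero => simp only [tmul_zero, LinearEquiv.map_zero, LinearMap.map_zero]
      | tmul b c' =>
        simp only [TensorProduct.assoc_symm_tmul, TensorProduct.map_tmul,
          LinearMap.comp_apply, LinearMap.mul'_apply, mul_assoc]
      | add m₁ m₂ ih₁ ih₂ =>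
        simp only [tmul_add, LinearEquiv.map_add, LinearMap.map_add, ih₁, ih₂]
    | add t₁ t₂ ih₁ ih₂ => simp only [LinearEquiv.map_add, LinearMap.map_add, ih₁, ih₂]
  simp only [LinearMap.comp_apply]
  rw [h1, hco c, h2, ← h3]

lemma coassoc₂ (s : B ⊗[K] B) :
    (LinearMap.rTensor (B ⊗[K] B) (Δ₂ : B ⊗[K] B →ₗ[K] _)) (Δ₂ s) =
      (TensorProduct.assoc K (B ⊗[K] B) (B ⊗[K] B) (B ⊗[K] B)).symm
        ((LinearMap.lTensor (B ⊗[K] B) (Δ₂ : B ⊗[K] B →ₗ[K] _)) (Δ₂ s)) := by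
  have C1 : ∀ u v : B ⊗[K] B,
      (LinearMap.rTensor (B ⊗[K] B) (Δ₂ : B ⊗[K] B →ₗ[K] _))
        (TensorProduct.tensorTensorTensorComm K B B B B (u ⊗ₜ[K] v)) =
      (LinearMap.rTensor (B ⊗[K] B)
          (TensorProduct.tensorTensorTensorComm K B B B B).toLinearMap)
        ((TensorProduct.tensorTensorTensorComm K (B ⊗[K] B) B (B ⊗[K] B) B)
          ((LinearMap.rTensor B (Coalgebra.comul (R := K)) u) ⊗ₜ[K]
           (LinearMap.rTensor B (Coalgebra.comul (R := K)) v))) := by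
    intro u v
    induction u using TensorProduct.induction_on with
    | zero => simp only [zero_tmul, LinearEquiv.map_zero, LinearMap.map_zero]
    | tmul a b =>
      induction v using TensorProduct.induction_on with
      | zero => simp only [tmul_zero, LinearEquiv.map_zero, LinearMap.map_zero]
      | tmul a' b' =>
        simp only [TensorProduct.tensorTensorTensorComm_tmul, LinearMap.rTensor_tmul]
        rfl
      | add v₁ v₂ ih₁ ih₂ =>
        simp only [tmul_add, LinearEquiv.map_add, LinearMap.map_add, ih₁, ih₂]
    | add u₁ u₂ ih₁ ih₂ =>
      simp only [add_tmul, LinearEquiv.map_add, LinearMap.map_add, ih₁, ih₂]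
  have C2 : ∀ u v : B ⊗[K] B,
      (LinearMap.lTensor (B ⊗[K] B) (Δ₂ : B ⊗[K] B →ₗ[K] _))
        (TensorProduct.tensorTensorTensorComm K B B B B (u ⊗ₜ[K] v)) =
      (LinearMap.lTensor (B ⊗[K] B)
          (TensorProduct.tensorTensorTensorComm K B B B B).toLinearMap)
        ((TensorProduct.tensorTensorTensorComm K B (B ⊗[K] B) B (B ⊗[K] B))
          ((LinearMap.lTensor B (Coalgebra.comul (R := K)) u) ⊗ₜ[K]
           (LinearMap.lTensor B (Coalgebra.comul (R := K)) v))) := by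
    intro u v
    induction u using TensorProduct.induction_on with
    | zero => simp only [zero_tmul, LinearEquiv.map_zero, LinearMap.map_zero]
    | tmul a b =>
      induction v using TensorProduct.induction_on with
      | zero => simp only [tmul_zero, LinearEquiv.map_zero, LinearMap.map_zero]
      | tmul a' b' =>
        simp only [TensorProduct.tensorTensorTensorComm_tmul, LinearMap.lTensor_tmul]
        rfl
      | add v₁ v₂ ih₁ ih₂ =>
        simp only [tmul_add, LinearEquiv.map_add, LinearMap.map_add, ih₁, ih₂]
    | add u₁ u₂ ih₁ ih₂ =>
      simp only [add_tmul, LinearEquiv.map_add, LinearMap.map_add, ih₁, ih₂]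
  have Sh : ∀ p q : (B ⊗[K] B) ⊗[K] B,
      (LinearMap.rTensor (B ⊗[K] B)
          (TensorProduct.tensorTensorTensorComm K B B B B).toLinearMap)
        ((TensorProduct.tensorTensorTensorComm K (B ⊗[K] B) B (B ⊗[K] B) B) (p ⊗ₜ[K] q)) =
      (TensorProduct.assoc K (B ⊗[K] B) (B ⊗[K] B) (B ⊗[K] B)).symm
        ((LinearMap.lTensor (B ⊗[K] B)
            (TensorProduct.tensorTensorTensorComm K B B B B).toLinearMap)
          ((TensorProduct.tensorTensorTensorComm K B (B ⊗[K] B) B (B ⊗[K] B))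
            ((TensorProduct.assoc K B B B p) ⊗ₜ[K] (TensorProduct.assoc K B B B q)))) := by
    intro p q
    induction p using TensorProduct.induction_on with
    | zero => simp only [zero_tmul, LinearEquiv.map_zero, LinearMap.map_zero]
    | tmul m c =>
      induction m using TensorProduct.induction_on with
      | zero => simp only [zero_tmul, tmul_zero, LinearEquiv.map_zero, LinearMap.map_zero]
      | tmul a b =>
        induction q using TensorProduct.induction_on with
        | zero => simp only [tmul_zero, LinearEquiv.map_zero, LinearMap.map_zero]
        | tmul m' c' =>
          induction m' using TensorProduct.induction_on with
          | zero => simp only [zero_tmul, tmul_zero, LinearEquiv.map_zero, LinearMap.map_zero]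
          | tmul a' b' =>
            simp only [TensorProduct.assoc_tmul, TensorProduct.tensorTensorTensorComm_tmul,
              LinearMap.rTensor_tmul, LinearMap.lTensor_tmul, LinearEquiv.coe_coe,
              TensorProduct.assoc_symm_tmul]
          | add m₁ m₂ ih₁ ih₂ =>
            simp only [add_tmul, tmul_add, LinearEquiv.map_add, LinearMap.map_add, ih₁, ih₂]
        | add q₁ q₂ ih₁ ih₂ =>
          simp only [tmul_add, LinearEquiv.map_add, LinearMap.map_add, ih₁, ih₂]
      | add m₁ m₂ ih₁ ih₂ =>
        simp only [add_tmul, tmul_add, LinearEquiv.map_add, LinearMap.map_add, ih₁, ih₂]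
    | add p₁ p₂ ih₁ ih₂ =>
      simp only [add_tmul, LinearEquiv.map_add, LinearMap.map_add, ih₁, ih₂]
  induction s using TensorProduct.induction_on with
  | zero => simp only [LinearMap.map_zero, LinearEquiv.map_zero]
  | tmul x y =>
    rw [Δ₂_tmul, C1, Sh]
    have hx : TensorProduct.assoc K B B B
        (LinearMap.rTensor B (Coalgebra.comul (R := K)) (Coalgebra.comul x)) =
        LinearMap.lTensor B (Coalgebra.comul (R := K)) (Coalgebra.comul x) :=
      Coalgebra.coassoc_apply x
    have hy : TensorProduct.assoc K B B B
        (LinearMap.rTensor B (Coalgebra.comul (R := K)) (Coalgebra.comul y)) =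
        LinearMap.lTensor B (Coalgebra.comul (R := K)) (Coalgebra.comul y) :=
      Coalgebra.coassoc_apply y
    rw [show (TensorProduct.assoc K B B B)
        (LinearMap.rTensor B (Coalgebra.comul (R := K)) (Coalgebra.comul x)) ⊗ₜ[K]
        (TensorProduct.assoc K B B B)
        (LinearMap.rTensor B (Coalgebra.comul (R := K)) (Coalgebra.comul y)) =
        (LinearMap.lTensor B (Coalgebra.comul (R := K)) (Coalgebra.comul x)) ⊗ₜ[K]
        (LinearMap.lTensor B (Coalgebra.comul (R := K)) (Coalgebra.comul y)) by rw [hx, hy]]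
    rw [← C2]
  | add s₁ s₂ ih₁ ih₂ =>
    simp only [LinearMap.map_add, LinearEquiv.map_add, ih₁, ih₂]

set_option maxHeartbeats 1000000 in
lemma conv₂_assoc (f g h : B ⊗[K] B →ₗ[K] A) :
    conv₂ (conv₂ f g) h = conv₂ f (conv₂ g h) := by
  have H := conv_assoc_aux (C := B ⊗[K] B) (Δ₂ : B ⊗[K] B →ₗ[K] (B ⊗[K] B) ⊗[K] (B ⊗[K] B))
    coassoc₂ f g h
  exact H

lemma part2_mult (rB : B → B → Prop) (hsymB : ∀ a b, rB a b → rB b a)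
    (hΔ : ∀ (U : Set B) (c : B), (∀ u ∈ U, rB u c) →
      Coalgebra.comul (R := K) c ∈ Submodule.span K
        {t : B ⊗[K] B | ∃ a b : B, (∀ u ∈ U, rB u a) ∧ (∀ u ∈ U, rB u b) ∧
          rB a b ∧ t = a ⊗ₜ[K] b})
    (φ ψ : B →ₗ[K] A)
    (hφmult : ∀ c d : B, rB c d → φ (c * d) = φ c * φ d)
    (hφψ : locConv φ ψ = (eB : B →ₗ[K] A))
    (hψφ : locConv ψ φ = (eB : B →ₗ[K] A)) :
    ∀ c d : B, rB c d → ψ (c * d) = ψ c * ψ d := by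
  classical
  set Sp : Set (B ⊗[K] B) := {t | ∃ a b : B, rB a b ∧ t = a ⊗ₜ[K] b} with hSp
  set S : Submodule K (B ⊗[K] B) := Submodule.span K Sp with hS
  set W : Set ((B ⊗[K] B) ⊗[K] (B ⊗[K] B)) :=
    {w | ∃ t₁ t₂ : B ⊗[K] B, t₁ ∈ Sp ∧ t₂ ∈ Sp ∧ w = t₁ ⊗ₜ[K] t₂} with hW
  set F : B ⊗[K] B →ₗ[K] A := φ ∘ₗ LinearMap.mul' K B with hF
  set H : B ⊗[K] B →ₗ[K] A := ψ ∘ₗ LinearMap.mul' K B with hH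
  set G : B ⊗[K] B →ₗ[K] A := (LinearMap.mul' K A) ∘ₗ TensorProduct.map ψ ψ with hG
  set F' : B ⊗[K] B →ₗ[K] A := (LinearMap.mul' K A) ∘ₗ TensorProduct.map φ φ with hF'
  -- locality of Δ₂
  have hV : ∀ s ∈ S, Δ₂ s ∈ Submodule.span K W := by
    intro s hs
    induction hs using Submodule.span_induction with
    | mem t ht =>
      obtain ⟨c, d, hcd, rfl⟩ := ht
      rw [Δ₂_tmul]
      have hc := hΔ {d} c (by simpa using hsymB c d hcd)
      have outer : ∀ u ∈ Submodule.span K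
          {t : B ⊗[K] B | ∃ a b : B, (∀ w ∈ ({d} : Set B), rB w a) ∧
            (∀ w ∈ ({d} : Set B), rB w b) ∧ rB a b ∧ t = a ⊗ₜ[K] b},
          TensorProduct.tensorTensorTensorComm K B B B B (u ⊗ₜ[K] Coalgebra.comul d)
            ∈ Submodule.span K W := by
        intro u hu
        induction hu using Submodule.span_induction with
        | mem t' ht' =>
          obtain ⟨a, b, ha, hb, hab, rfl⟩ := ht'
          simp only [Set.mem_singleton_iff, forall_eq] at ha hb
          have hd := hΔ {a, b} d (by
            intro w hw
            rcases hw with rfl | rfl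
            · exact hsymB d w ha
            · exact hsymB d w hb)
          have inner : ∀ v ∈ Submodule.span K
              {t : B ⊗[K] B | ∃ a' b' : B, (∀ w ∈ ({a, b} : Set B), rB w a') ∧
                (∀ w ∈ ({a, b} : Set B), rB w b') ∧ rB a' b' ∧ t = a' ⊗ₜ[K] b'},
              TensorProduct.tensorTensorTensorComm K B B B B ((a ⊗ₜ[K] b) ⊗ₜ[K] v)
                ∈ Submodule.span K W := by
            intro v hv
            induction hv using Submodule.span_induction with
            | mem t'' ht'' =>
              obtain ⟨a', b', ha', hb', hab', rfl⟩ := ht''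
              simp only [Set.mem_insert_iff, Set.mem_singleton_iff, forall_eq_or_imp,
                forall_eq] at ha' hb'
              rw [TensorProduct.tensorTensorTensorComm_tmul]
              exact Submodule.subset_span
                ⟨a ⊗ₜ[K] a', b ⊗ₜ[K] b', ⟨a, a', ha'.1, rfl⟩, ⟨b, b', hb'.2, rfl⟩, rfl⟩
            | zero => simp only [tmul_zero, LinearEquiv.map_zero]; exact Submodule.zero_mem _
            | add v₁ v₂ h₁ h₂ ih₁ ih₂ =>
              rw [tmul_add, LinearEquiv.map_add]; exact Submodule.add_mem _ ih₁ ih₂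
            | smul k v₁ h₁ ih =>
              rw [tmul_smul, LinearEquiv.map_smul]; exact Submodule.smul_mem _ _ ih
          exact inner (Coalgebra.comul d) hd
        | zero => simp only [zero_tmul, LinearEquiv.map_zero]; exact Submodule.zero_mem _
        | add u₁ u₂ h₁ h₂ ih₁ ih₂ =>
          rw [add_tmul, LinearEquiv.map_add]; exact Submodule.add_mem _ ih₁ ih₂
        | smul k u₁ h₁ ih =>
          rw [← smul_tmul', LinearEquiv.map_smul]; exact Submodule.smul_mem _ _ ih
      exact outer (Coalgebra.comul c) hc
    | zero => rw [LinearMap.map_zero]; exact Submodule.zero_mem _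
    | add s₁ s₂ h₁ h₂ ih₁ ih₂ => rw [LinearMap.map_add]; exact Submodule.add_mem _ ih₁ ih₂
    | smul k s₁ h₁ ih => rw [LinearMap.map_smul]; exact Submodule.smul_mem _ _ ih
  -- F agrees with F' on S
  have hFF' : ∀ t ∈ S, F t = F' t := by
    intro t ht
    induction ht using Submodule.span_induction with
    | mem t' ht' =>
      obtain ⟨a, b, hab, rfl⟩ := ht'
      simp only [hF, hF', LinearMap.comp_apply, LinearMap.mul'_apply, TensorProduct.map_tmul]
      exact hφmult a b hab
    | zero => simp only [LinearMap.map_zero]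
    | add t₁ t₂ h₁ h₂ ih₁ ih₂ => simp only [LinearMap.map_add, ih₁, ih₂]
    | smul k t₁ h₁ ih => simp only [LinearMap.map_smul, ih]
  -- conv₂ G F agrees with e₂ on S
  have hGF : ∀ s ∈ S, conv₂ G F s = (e₂ : B ⊗[K] B →ₗ[K] A) s := by
    intro s hs
    have hrepl : ∀ w ∈ Submodule.span K W,
        LinearMap.mul' K A (TensorProduct.map G F w) =
          LinearMap.mul' K A (TensorProduct.map G F' w) := by
      intro w hw
      induction hw using Submodule.span_induction with
      | mem w' hw' =>
        obtain ⟨t₁, t₂, ht₁, ht₂, rfl⟩ := hw'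
        simp only [TensorProduct.map_tmul, LinearMap.mul'_apply]
        rw [hFF' t₂ (Submodule.subset_span ht₂)]
      | zero => simp only [LinearMap.map_zero]
      | add w₁ w₂ h₁ h₂ ih₁ ih₂ => simp only [LinearMap.map_add, ih₁, ih₂]
      | smul k w₁ h₁ ih => simp only [LinearMap.map_smul, ih]
    rw [conv₂_apply, hrepl (Δ₂ s) (hV s hs)]
    have : conv₂ G F' = (e₂ : B ⊗[K] B →ₗ[K] A) := conv₂_mulmap ψ φ hψφ
    rw [← conv₂_apply, this]
  -- main chain
  have main : ∀ s ∈ S, H s = G s := by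
    intro s hs
    have step1 : G s = conv₂ G (conv₂ F H) s := by
      rw [conv₂_mulcomp φ ψ hφψ, conv₂_unit_right]
    have step2 : conv₂ G (conv₂ F H) s = conv₂ (conv₂ G F) H s := by
      rw [conv₂_assoc]
    have step3 : conv₂ (conv₂ G F) H s = conv₂ e₂ H s := by
      rw [conv₂_apply, conv₂_apply]
      have hrepl : ∀ w ∈ Submodule.span K W,
          LinearMap.mul' K A (TensorProduct.map (conv₂ G F) H w) =
            LinearMap.mul' K A (TensorProduct.map (e₂ : B ⊗[K] B →ₗ[K] A) H w) := by
        intro w hw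
        induction hw using Submodule.span_induction with
        | mem w' hw' =>
          obtain ⟨t₁, t₂, ht₁, ht₂, rfl⟩ := hw'
          simp only [TensorProduct.map_tmul, LinearMap.mul'_apply]
          rw [hGF t₁ (Submodule.subset_span ht₁)]
        | zero => simp only [LinearMap.map_zero]
        | add w₁ w₂ h₁ h₂ ih₁ ih₂ => simp only [LinearMap.map_add, ih₁, ih₂]
        | smul k w₁ h₁ ih => simp only [LinearMap.map_smul, ih]
      exact hrepl (Δ₂ s) (hV s hs)
    have step4 : conv₂ e₂ H s = H s := by rw [conv₂_unit_left]
    rw [step1, step2, step3, step4]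
  intro c d hcd
  have := main (c ⊗ₜ[K] d) (Submodule.subset_span ⟨c, d, hcd, rfl⟩)
  simpa only [hH, hG, LinearMap.comp_apply, LinearMap.mul'_apply,
    TensorProduct.map_tmul] using this

lemma locConv_assoc (f g h : B →ₗ[K] A) :
    locConv (locConv f g) h = locConv f (locConv g h) := by
  have H := conv_assoc_aux (C := B) Coalgebra.comul
    (fun c => (Coalgebra.coassoc_symm_apply c).symm) f g h
  exact H

lemma locConv_unit_left (f : B →ₗ[K] A) : locConv (eB : B →ₗ[K] A) f = f := by
  apply LinearMap.ext
  intro c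
  have key : ∀ u : B ⊗[K] B,
      LinearMap.mul' K A (TensorProduct.map (eB : B →ₗ[K] A) f u) =
        f ((TensorProduct.lid K B) (LinearMap.rTensor B (Coalgebra.counit (R := K)) u)) := by
    intro u
    induction u using TensorProduct.induction_on with
    | zero => simp only [LinearMap.map_zero, LinearEquiv.map_zero]
    | tmul a b =>
      simp only [TensorProduct.map_tmul, LinearMap.mul'_apply, LinearMap.rTensor_tmul,
        TensorProduct.lid_tmul, LinearMap.map_smul, eB, LinearMap.comp_apply,
        Algebra.linearMap_apply]
      rw [Algebra.smul_def]
    | add u₁ u₂ ih₁ ih₂ => simp only [LinearMap.map_add, LinearEquiv.map_add, ih₁, ih₂]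
  have : locConv (eB : B →ₗ[K] A) f c =
      LinearMap.mul' K A (TensorProduct.map (eB : B →ₗ[K] A) f (Coalgebra.comul c)) := rfl
  rw [this, key, Coalgebra.rTensor_counit_comul]
  simp

lemma locConv_unit_right (f : B →ₗ[K] A) : locConv f (eB : B →ₗ[K] A) = f := by
  apply LinearMap.ext
  intro c
  have key : ∀ u : B ⊗[K] B,
      LinearMap.mul' K A (TensorProduct.map f (eB : B →ₗ[K] A) u) =
        f ((TensorProduct.rid K B) (LinearMap.lTensor B (Coalgebra.counit (R := K)) u)) := by
    intro u
    induction u using TensorProduct.induction_on with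
    | zero => simp only [LinearMap.map_zero, LinearEquiv.map_zero]
    | tmul a b =>
      simp only [TensorProduct.map_tmul, LinearMap.mul'_apply, LinearMap.lTensor_tmul,
        TensorProduct.rid_tmul, LinearMap.map_smul, eB, LinearMap.comp_apply,
        Algebra.linearMap_apply]
      rw [Algebra.smul_def, mul_comm]
    | add u₁ u₂ ih₁ ih₂ => simp only [LinearMap.map_add, LinearEquiv.map_add, ih₁, ih₂]
  have : locConv f (eB : B →ₗ[K] A) c =
      LinearMap.mul' K A (TensorProduct.map f (eB : B →ₗ[K] A) (Coalgebra.comul c)) := rfl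
  rw [this, key, Coalgebra.lTensor_counit_comul]
  simp

lemma map_sub_left (f g : B →ₗ[K] A) (h : B →ₗ[K] A) :
    TensorProduct.map (f - g) h = TensorProduct.map f h - TensorProduct.map g h := by
  apply TensorProduct.ext'
  intro u v
  simp [TensorProduct.map_tmul, LinearMap.sub_apply, sub_tmul]

lemma map_sub_right (f : B →ₗ[K] A) (g h : B →ₗ[K] A) :
    TensorProduct.map f (g - h) = TensorProduct.map f g - TensorProduct.map f h := by
  apply TensorProduct.ext'
  intro u v
  simp [TensorProduct.map_tmul, LinearMap.sub_apply, tmul_sub]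

lemma locConv_add_left (f g h : B →ₗ[K] A) :
    locConv (f + g) h = locConv f h + locConv g h := by
  apply LinearMap.ext; intro c
  simp only [locConv, LinearMap.comp_apply, LinearMap.add_apply, TensorProduct.map_add_left,
    LinearMap.add_apply, LinearMap.map_add]

lemma locConv_sub_right (f g h : B →ₗ[K] A) :
    locConv f (g - h) = locConv f g - locConv f h := by
  apply LinearMap.ext; intro c
  simp only [locConv, LinearMap.comp_apply, LinearMap.sub_apply, map_sub_right,
    LinearMap.map_sub]

/-- Convolution powers of `eB - φ`. -/
noncomputable def Pp (φ : B →ₗ[K] A) : ℕ → (B →ₗ[K] A)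
  | 0 => eB
  | (k+1) => locConv (Pp φ k) ((eB : B →ₗ[K] A) - φ)

lemma tele (φ ψ : B →ₗ[K] A) (hφψ : locConv φ ψ = (eB : B →ₗ[K] A)) (n : ℕ) :
    ψ = (Finset.range (n+1)).sum (fun k => Pp φ k) + locConv (Pp φ (n+1)) ψ := by
  have sumconv : ∀ m : ℕ, locConv ((Finset.range (m+1)).sum (fun k => Pp φ k)) φ =
      (eB : B →ₗ[K] A) - Pp φ (m+1) := by
    intro m
    induction m with
    | zero =>
      have h0 : (Finset.range 1).sum (fun k => Pp φ k) = Pp φ 0 := by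
        rw [Finset.range_one, Finset.sum_singleton]
      rw [h0]
      show locConv (eB : B →ₗ[K] A) φ =
        (eB : B →ₗ[K] A) - locConv (eB : B →ₗ[K] A) ((eB : B →ₗ[K] A) - φ)
      rw [locConv_unit_left, locConv_unit_left]
      abel
    | succ m ih =>
      rw [Finset.sum_range_succ, locConv_add_left, ih]
      have h2 : locConv (Pp φ (m+1)) φ = Pp φ (m+1) - Pp φ (m+2) := by
        have hstep : Pp φ (m+2) = locConv (Pp φ (m+1)) ((eB : B →ₗ[K] A) - φ) := rfl
        rw [hstep, locConv_sub_right, locConv_unit_right]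
        abel
      rw [h2]
      abel
  have h4 : (eB : B →ₗ[K] A) = locConv ((Finset.range (n+1)).sum (fun k => Pp φ k)) φ + Pp φ (n+1) := by
    rw [sumconv n]; abel
  calc ψ = locConv (eB : B →ₗ[K] A) ψ := (locConv_unit_left ψ).symm
    _ = locConv (locConv ((Finset.range (n+1)).sum (fun k => Pp φ k)) φ) ψ
          + locConv (Pp φ (n+1)) ψ := by rw [← locConv_add_left, ← h4]
    _ = locConv ((Finset.range (n+1)).sum (fun k => Pp φ k)) (locConv φ ψ)
          + locConv (Pp φ (n+1)) ψ := by rw [locConv_assoc]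
    _ = (Finset.range (n+1)).sum (fun k => Pp φ k) + locConv (Pp φ (n+1)) ψ := by
          rw [hφψ, locConv_unit_right]

lemma Pp_vanish (Bgr : ℕ → Submodule K B)
    (hB0 : Bgr 0 = Submodule.span K {(1 : B)})
    (hconn0 : ∀ (n : ℕ) (c : B), c ∈ Bgr n →
      Coalgebra.comul (R := K) c ∈ Submodule.span K
        {t : B ⊗[K] B | ∃ (p q : ℕ) (a b : B), p + q = n ∧ a ∈ Bgr p ∧ b ∈ Bgr q ∧
          t = a ⊗ₜ[K] b})
    (φ : B →ₗ[K] A) (hφ1 : φ 1 = 1) :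
    ∀ m k, k < m → ∀ c ∈ Bgr k, Pp φ m c = 0 := by
  have hαone : ((eB : B →ₗ[K] A) - φ) 1 = 0 := by
    simp [eB, Bialgebra.counit_one, hφ1]
  intro m
  induction m with
  | zero => intro k hk; exact absurd hk (Nat.not_lt_zero k)
  | succ m ih =>
    intro k hk c hc
    have hval : Pp φ (m+1) c =
        LinearMap.mul' K A (TensorProduct.map (Pp φ m) ((eB : B →ₗ[K] A) - φ)
          (Coalgebra.comul c)) := rfl
    rw [hval]
    have hcm := hconn0 k c hc
    have key : ∀ u ∈ Submodule.span K
        {t : B ⊗[K] B | ∃ (p q : ℕ) (a b : B), p + q = k ∧ a ∈ Bgr p ∧ b ∈ Bgr q ∧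
          t = a ⊗ₜ[K] b},
        LinearMap.mul' K A (TensorProduct.map (Pp φ m) ((eB : B →ₗ[K] A) - φ) u) = 0 := by
      intro u hu
      induction hu using Submodule.span_induction with
      | mem t ht =>
        obtain ⟨p, q, a, b, hpq, hap, hbq, rfl⟩ := ht
        simp only [TensorProduct.map_tmul, LinearMap.mul'_apply]
        by_cases hq : q = 0
        · subst hq
          rw [hB0] at hbq
          obtain ⟨μ, hμ⟩ := Submodule.mem_span_singleton.mp hbq
          rw [← hμ, LinearMap.map_smul, hαone, smul_zero, mul_zero]
        · have hpm : p < m := by omega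
          rw [ih p hpm a hap, zero_mul]
      | zero => simp only [LinearMap.map_zero]
      | add u₁ u₂ h₁ h₂ ih₁ ih₂ => simp only [LinearMap.map_add, ih₁, ih₂, add_zero]
      | smul r u₁ h₁ ih₁ => simp only [LinearMap.map_smul, ih₁, smul_zero]
    exact key _ hcm

lemma killer_vanish (Bgr : ℕ → Submodule K B)
    (hB0 : Bgr 0 = Submodule.span K {(1 : B)})
    (hconn0 : ∀ (n : ℕ) (c : B), c ∈ Bgr n →
      Coalgebra.comul (R := K) c ∈ Submodule.span K
        {t : B ⊗[K] B | ∃ (p q : ℕ) (a b : B), p + q = n ∧ a ∈ Bgr p ∧ b ∈ Bgr q ∧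
          t = a ⊗ₜ[K] b})
    (φ ψ : B →ₗ[K] A) (hφ1 : φ 1 = 1) :
    ∀ n k, k ≤ n → ∀ c ∈ Bgr k, locConv (Pp φ (n+1)) ψ c = 0 := by
  intro n k hk c hc
  have hval : locConv (Pp φ (n+1)) ψ c =
      LinearMap.mul' K A (TensorProduct.map (Pp φ (n+1)) ψ (Coalgebra.comul c)) := rfl
  rw [hval]
  have hcm := hconn0 k c hc
  have key : ∀ u ∈ Submodule.span K
      {t : B ⊗[K] B | ∃ (p q : ℕ) (a b : B), p + q = k ∧ a ∈ Bgr p ∧ b ∈ Bgr q ∧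
        t = a ⊗ₜ[K] b},
      LinearMap.mul' K A (TensorProduct.map (Pp φ (n+1)) ψ u) = 0 := by
    intro u hu
    induction hu using Submodule.span_induction with
    | mem t ht =>
      obtain ⟨p, q, a, b, hpq, hap, hbq, rfl⟩ := ht
      simp only [TensorProduct.map_tmul, LinearMap.mul'_apply]
      have hpn : p < n + 1 := by omega
      rw [Pp_vanish Bgr hB0 hconn0 φ hφ1 (n+1) p hpn a hap, zero_mul]
    | zero => simp only [LinearMap.map_zero]
    | add u₁ u₂ h₁ h₂ ih₁ ih₂ => simp only [LinearMap.map_add, ih₁, ih₂, add_zero]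
    | smul r u₁ h₁ ih₁ => simp only [LinearMap.map_smul, ih₁, smul_zero]
  exact key _ hcm

lemma psi_repr (Bgr : ℕ → Submodule K B) (hinternal : DirectSum.IsInternal Bgr)
    (hB0 : Bgr 0 = Submodule.span K {(1 : B)})
    (hconn0 : ∀ (n : ℕ) (c : B), c ∈ Bgr n →
      Coalgebra.comul (R := K) c ∈ Submodule.span K
        {t : B ⊗[K] B | ∃ (p q : ℕ) (a b : B), p + q = n ∧ a ∈ Bgr p ∧ b ∈ Bgr q ∧
          t = a ⊗ₜ[K] b})
    (φ ψ : B →ₗ[K] A) (hφ1 : φ 1 = 1)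
    (hφψ : locConv φ ψ = (eB : B →ₗ[K] A)) :
    ∀ c : B, ∃ N : ℕ, ∀ n, N ≤ n →
      ψ c = ∑ k ∈ Finset.range (n+1), Pp φ k c := by
  intro c
  have htop : c ∈ ⨆ i, Bgr i := by
    rw [hinternal.submodule_iSup_eq_top]; trivial
  rw [Submodule.mem_iSup_iff_exists_finset] at htop
  obtain ⟨s, hs⟩ := htop
  refine ⟨s.sup id, fun n hn => ?_⟩
  have hkill : locConv (Pp φ (n+1)) ψ c = 0 := by
    have hle : (⨆ i ∈ s, Bgr i) ≤ LinearMap.ker (locConv (Pp φ (n+1)) ψ) := by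
      refine iSup₂_le fun i hi => ?_
      intro x hx
      have hin : i ≤ n := le_trans (Finset.le_sup (f := id) hi) hn
      exact killer_vanish Bgr hB0 hconn0 φ ψ hφ1 n i hin x hx
    exact hle hs
  have := congrFun (congrArg (fun (F : B →ₗ[K] A) => (F : B → A)) (tele φ ψ hφψ n)) c
  simp only [LinearMap.add_apply, LinearMap.coe_sum, Finset.sum_apply] at this
  rw [this, hkill, add_zero]

section Loc

variable (rB : B → B → Prop) (rA : A → A → Prop)

lemma rA_e (honeA : ∀ x : A, rA x 1)
    (hsmulA : ∀ (x : A) (k : K) (a : A), rA x a → rA x (k • a))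
    (x : A) (c : B) : rA x ((eB : B →ₗ[K] A) c) := by
  have := hsmulA x (Coalgebra.counit c) 1 (honeA x)
  simpa [eB, Algebra.algebraMap_eq_smul_one] using this

lemma rA_sub (haddA : ∀ x a b : A, rA x a → rA x b → rA x (a + b))
    (hsmulA : ∀ (x : A) (k : K) (a : A), rA x a → rA x (k • a))
    (x a b : A) (ha : rA x a) (hb : rA x b) : rA x (a - b) := by
  have := haddA x a ((-1 : K) • b) ha (hsmulA x (-1) b hb)
  simpa [neg_one_smul, sub_eq_add_neg] using this

lemma rA_alpha (hsymA : ∀ a b, rA a b → rA b a)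
    (haddA : ∀ x a b : A, rA x a → rA x b → rA x (a + b))
    (hsmulA : ∀ (x : A) (k : K) (a : A), rA x a → rA x (k • a))
    (honeA : ∀ x : A, rA x 1)
    (φ : B →ₗ[K] A) (hindep : ∀ c d, rB c d → rA (φ c) (φ d)) :
    ∀ c d, rB c d → rA (((eB : B →ₗ[K] A) - φ) c) (((eB : B →ₗ[K] A) - φ) d) := by
  intro c d h
  have h1 : rA (φ c) (((eB : B →ₗ[K] A) - φ) d) := by
    rw [LinearMap.sub_apply]
    exact rA_sub rA haddA hsmulA _ _ _ (rA_e rA honeA hsmulA _ d) (hindep c d h)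
  apply hsymA
  rw [LinearMap.sub_apply]
  apply rA_sub rA haddA hsmulA
  · exact rA_e rA honeA hsmulA _ c
  · exact hsymA _ _ h1

lemma L1 (hsymB : ∀ a b, rB a b → rB b a)
    (hsymA : ∀ a b, rA a b → rA b a)
    (hzeroA : ∀ x : A, rA x 0)
    (haddA : ∀ x a b : A, rA x a → rA x b → rA x (a + b))
    (hsmulA : ∀ (x : A) (k : K) (a : A), rA x a → rA x (k • a))
    (hcompatA : ∀ x a b : A, rA x a → rA x b → rA a b → rA x (a * b))
    (honeA : ∀ x : A, rA x 1)
    (hΔ : ∀ (U : Set B) (c : B), (∀ u ∈ U, rB u c) →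
      Coalgebra.comul (R := K) c ∈ Submodule.span K
        {t : B ⊗[K] B | ∃ a b : B, (∀ u ∈ U, rB u a) ∧ (∀ u ∈ U, rB u b) ∧
          rB a b ∧ t = a ⊗ₜ[K] b})
    (φ : B →ₗ[K] A) (hindep : ∀ c d, rB c d → rA (φ c) (φ d)) :
    ∀ (j : ℕ) (c d : B), rB c d → rA (((eB : B →ₗ[K] A) - φ) c) (Pp φ j d) := by
  intro j
  induction j with
  | zero => intro c d h; exact rA_e rA honeA hsmulA _ d
  | succ j ih =>
    intro c d h
    have hval : Pp φ (j+1) d =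
        LinearMap.mul' K A (TensorProduct.map (Pp φ j) ((eB : B →ₗ[K] A) - φ)
          (Coalgebra.comul d)) := rfl
    rw [hval]
    have hd := hΔ {c} d (by simpa using h)
    have key : ∀ u ∈ Submodule.span K
        {t : B ⊗[K] B | ∃ a b : B, (∀ w ∈ ({c} : Set B), rB w a) ∧
          (∀ w ∈ ({c} : Set B), rB w b) ∧ rB a b ∧ t = a ⊗ₜ[K] b},
        rA (((eB : B →ₗ[K] A) - φ) c)
          (LinearMap.mul' K A (TensorProduct.map (Pp φ j) ((eB : B →ₗ[K] A) - φ) u)) := by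
      intro u hu
      induction hu using Submodule.span_induction with
      | mem t ht =>
        obtain ⟨a, b, ha, hb, hab, rfl⟩ := ht
        simp only [Set.mem_singleton_iff, forall_eq] at ha hb
        simp only [TensorProduct.map_tmul, LinearMap.mul'_apply]
        refine hcompatA _ _ _ (ih c a ha)
          (rA_alpha rB rA hsymA haddA hsmulA honeA φ hindep c b hb)
          (hsymA _ _ (ih b a (hsymB a b hab)))
      | zero => rw [LinearMap.map_zero, LinearMap.map_zero]; exact hzeroA _
      | add u₁ u₂ h₁ h₂ ih₁ ih₂ =>
        rw [LinearMap.map_add, LinearMap.map_add]; exact haddA _ _ _ ih₁ ih₂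
      | smul r u₁ h₁ ih₁ =>
        rw [LinearMap.map_smul, LinearMap.map_smul]; exact hsmulA _ _ _ ih₁
    exact key _ hd

lemma L2 (hsymB : ∀ a b, rB a b → rB b a)
    (hsymA : ∀ a b, rA a b → rA b a)
    (hzeroA : ∀ x : A, rA x 0)
    (haddA : ∀ x a b : A, rA x a → rA x b → rA x (a + b))
    (hsmulA : ∀ (x : A) (k : K) (a : A), rA x a → rA x (k • a))
    (hcompatA : ∀ x a b : A, rA x a → rA x b → rA a b → rA x (a * b))
    (honeA : ∀ x : A, rA x 1)
    (hΔ : ∀ (U : Set B) (c : B), (∀ u ∈ U, rB u c) →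
      Coalgebra.comul (R := K) c ∈ Submodule.span K
        {t : B ⊗[K] B | ∃ a b : B, (∀ u ∈ U, rB u a) ∧ (∀ u ∈ U, rB u b) ∧
          rB a b ∧ t = a ⊗ₜ[K] b})
    (φ : B →ₗ[K] A) (hindep : ∀ c d, rB c d → rA (φ c) (φ d)) :
    ∀ (k j : ℕ) (c d : B), rB c d → rA (Pp φ k c) (Pp φ j d) := by
  intro k
  induction k with
  | zero =>
    intro j c d h
    exact hsymA _ _ (rA_e rA honeA hsmulA _ c)
  | succ k ih =>
    intro j c d h
    apply hsymA
    have hval : Pp φ (k+1) c =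
        LinearMap.mul' K A (TensorProduct.map (Pp φ k) ((eB : B →ₗ[K] A) - φ)
          (Coalgebra.comul c)) := rfl
    rw [hval]
    have hc := hΔ {d} c (by simpa using hsymB c d h)
    have key : ∀ u ∈ Submodule.span K
        {t : B ⊗[K] B | ∃ a b : B, (∀ w ∈ ({d} : Set B), rB w a) ∧
          (∀ w ∈ ({d} : Set B), rB w b) ∧ rB a b ∧ t = a ⊗ₜ[K] b},
        rA (Pp φ j d)
          (LinearMap.mul' K A (TensorProduct.map (Pp φ k) ((eB : B →ₗ[K] A) - φ) u)) := by
      intro u hu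
      induction hu using Submodule.span_induction with
      | mem t ht =>
        obtain ⟨a, b, ha, hb, hab, rfl⟩ := ht
        simp only [Set.mem_singleton_iff, forall_eq] at ha hb
        simp only [TensorProduct.map_tmul, LinearMap.mul'_apply]
        refine hcompatA _ _ _ (hsymA _ _ (ih j a d (hsymB d a ha)))
          (hsymA _ _ (L1 rB rA hsymB hsymA hzeroA haddA hsmulA hcompatA honeA hΔ φ hindep
            j b d (hsymB d b hb)))
          (hsymA _ _ (L1 rB rA hsymB hsymA hzeroA haddA hsmulA hcompatA honeA hΔ φ hindep
            k b a (hsymB a b hab)))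
      | zero => rw [LinearMap.map_zero, LinearMap.map_zero]; exact hzeroA _
      | add u₁ u₂ h₁ h₂ ih₁ ih₂ =>
        rw [LinearMap.map_add, LinearMap.map_add]; exact haddA _ _ _ ih₁ ih₂
      | smul r u₁ h₁ ih₁ =>
        rw [LinearMap.map_smul, LinearMap.map_smul]; exact hsmulA _ _ _ ih₁
    exact key _ hc

lemma rA_sum {ι : Type*} (hzeroA : ∀ x : A, rA x 0)
    (haddA : ∀ x a b : A, rA x a → rA x b → rA x (a + b))
    (x : A) (s : Finset ι) (f : ι → A) (h : ∀ i ∈ s, rA x (f i)) :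
    rA x (∑ i ∈ s, f i) := by
  classical
  induction s using Finset.cons_induction with
  | empty => simpa using hzeroA x
  | cons i s his ih =>
    rw [Finset.sum_cons]
    exact haddA _ _ _ (h i (Finset.mem_cons_self i s)) (ih fun j hj => h j (Finset.mem_cons_of_mem hj))

end Loc

lemma psi_one (φ ψ : B →ₗ[K] A) (hψφ : locConv ψ φ = (eB : B →ₗ[K] A)) (hφ1 : φ 1 = 1) :
    ψ 1 = 1 := by
  have h := congrFun (congrArg (fun (F : B →ₗ[K] A) => (F : B → A)) hψφ) (1 : B)
  simp only [locConv, LinearMap.comp_apply] at h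
  rw [Bialgebra.comul_one, Algebra.TensorProduct.one_def] at h
  simp only [TensorProduct.map_tmul, LinearMap.mul'_apply, hφ1, mul_one] at h
  rw [h]
  simp [eB]

lemma locConv_apply (φ ψ : B →ₗ[K] A) (c : B) :
    locConv φ ψ c = LinearMap.mul' K A (TensorProduct.map φ ψ (Coalgebra.comul c)) := rfl

lemma part1 (rB : B → B → Prop) (hsymB : ∀ a b, rB a b → rB b a)
    (hΔ : ∀ (U : Set B) (c : B), (∀ u ∈ U, rB u c) →
      Coalgebra.comul (R := K) c ∈ Submodule.span K
        {t : B ⊗[K] B | ∃ a b : B, (∀ u ∈ U, rB u a) ∧ (∀ u ∈ U, rB u b) ∧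
          rB a b ∧ t = a ⊗ₜ[K] b})
    (φ ψ : B →ₗ[K] A)
    (hφ : ∀ c d : B, rB c d → φ (c * d) = φ c * φ d)
    (hψ : ∀ c d : B, rB c d → ψ (c * d) = ψ c * ψ d)
    (c d : B) (h : rB c d) :
    (locConv φ ψ) (c * d) = (locConv φ ψ) c * (locConv φ ψ) d := by
  have hc := hΔ {d} c (by simpa using hsymB c d h)
  simp only [locConv_apply, Bialgebra.comul_mul]
  have main : ∀ x ∈ Submodule.span K
      {t : B ⊗[K] B | ∃ a b : B, (∀ u ∈ ({d} : Set B), rB u a) ∧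
        (∀ u ∈ ({d} : Set B), rB u b) ∧ rB a b ∧ t = a ⊗ₜ[K] b},
      LinearMap.mul' K A (TensorProduct.map φ ψ (x * Coalgebra.comul d)) =
        LinearMap.mul' K A (TensorProduct.map φ ψ x) *
          LinearMap.mul' K A (TensorProduct.map φ ψ (Coalgebra.comul d)) := by
    intro x hx
    induction hx using Submodule.span_induction with
    | mem t ht =>
      obtain ⟨a, b, ha, hb, hab, rfl⟩ := ht
      simp only [Set.mem_singleton_iff, forall_eq] at ha hb
      have hd := hΔ {a, b} d (by
        intro u hu
        rcases hu with rfl | rfl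
        · exact hsymB d u ha
        · exact hsymB d u hb)
      have inner : ∀ y ∈ Submodule.span K
          {t : B ⊗[K] B | ∃ a' b' : B, (∀ u ∈ ({a, b} : Set B), rB u a') ∧
            (∀ u ∈ ({a, b} : Set B), rB u b') ∧ rB a' b' ∧ t = a' ⊗ₜ[K] b'},
          LinearMap.mul' K A (TensorProduct.map φ ψ ((a ⊗ₜ[K] b) * y)) =
            (φ a * ψ b) * LinearMap.mul' K A (TensorProduct.map φ ψ y) := by
        intro y hy
        induction hy using Submodule.span_induction with
        | mem t' ht' =>
          obtain ⟨a', b', ha', hb', hab', rfl⟩ := ht'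
          simp only [Set.mem_insert_iff, Set.mem_singleton_iff, forall_eq_or_imp,
            forall_eq] at ha' hb'
          rw [Algebra.TensorProduct.tmul_mul_tmul]
          simp only [TensorProduct.map_tmul, LinearMap.mul'_apply]
          rw [hφ a a' ha'.1, hψ b b' hb'.2]
          ring
        | zero => simp
        | add y₁ y₂ h₁ h₂ ih₁ ih₂ => simp only [mul_add, map_add, ih₁, ih₂]
        | smul k y₁ h₁ ih => simp only [mul_smul_comm, map_smul, ih, mul_smul_comm]
      have := inner (Coalgebra.comul d) hd
      rw [this]
      simp only [TensorProduct.map_tmul, LinearMap.mul'_apply]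
    | zero => simp
    | add x₁ x₂ h₁ h₂ ih₁ ih₂ => simp only [add_mul, map_add, ih₁, ih₂]
    | smul k x₁ h₁ ih => simp only [smul_mul_assoc, map_smul, ih, smul_mul_assoc]
  exact main _ hc


end S19

/-- Let `(B, ⊤, m, u, Δ, ε)` be a locality bialgebra and `(A, ⊤_A)`
a commutative locality algebra. If `φ, ψ : B → A` are independent locality linear
maps that are locality multiplicative, then `φ ⋆ ψ` is locality multiplicative.
If moreover `B` is connected, the convolution inverse of a locality algebra
homomorphism `φ` is again a locality algebra homomorphism. -/
theorem locality_bialgebra_convolution_multiplicative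
    {K B A : Type*} [Field K] [CommRing B] [Bialgebra K B]
    [CommRing A] [Algebra K A]
    (rB : B → B → Prop) (rA : A → A → Prop)
    (hsymB : ∀ a b, rB a b → rB b a) (hsymA : ∀ a b, rA a b → rA b a)
    (hzeroB : ∀ x : B, rB x 0) (hzeroA : ∀ x : A, rA x 0)
    (haddB : ∀ x a b : B, rB x a → rB x b → rB x (a + b))
    (haddA : ∀ x a b : A, rA x a → rA x b → rA x (a + b))
    (hsmulB : ∀ (x : B) (k : K) (a : B), rB x a → rB x (k • a))
    (hsmulA : ∀ (x : A) (k : K) (a : A), rA x a → rA x (k • a))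
    (hcompatB : ∀ x a b : B, rB x a → rB x b → rB a b → rB x (a * b))
    (hcompatA : ∀ x a b : A, rA x a → rA x b → rA a b → rA x (a * b))
    (honeB : ∀ x : B, rB x 1) (honeA : ∀ x : A, rA x 1)
    -- locality compatibility of the coproduct of B
    (hΔ : ∀ (U : Set B) (c : B), (∀ u ∈ U, rB u c) →
      Coalgebra.comul (R := K) c ∈ Submodule.span K
        {t : B ⊗[K] B | ∃ a b : B, (∀ u ∈ U, rB u a) ∧ (∀ u ∈ U, rB u b) ∧
          rB a b ∧ t = a ⊗ₜ[K] b})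
    -- the grading making B connected
    (Bgr : ℕ → Submodule K B)
    (hinternal : DirectSum.IsInternal Bgr)
    (hB0 : Bgr 0 = Submodule.span K {(1 : B)})
    (hkerε : LinearMap.ker (Coalgebra.counit (R := K) (A := B)) =
      ⨆ (n : ℕ) (_ : 1 ≤ n), Bgr n)
    (hconn : ∀ (U : Set B) (n : ℕ) (c : B), c ∈ Bgr n → (∀ u ∈ U, rB u c) →
      Coalgebra.comul (R := K) c ∈ Submodule.span K
        {t : B ⊗[K] B | ∃ (p q : ℕ) (a b : B), p + q = n ∧ a ∈ Bgr p ∧ b ∈ Bgr q ∧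
          (∀ u ∈ U, rB u a) ∧ (∀ u ∈ U, rB u b) ∧ rB a b ∧ t = a ⊗ₜ[K] b}) :
    -- (1) convolution of independent locality multiplicative maps is
    --     locality multiplicative
    (∀ φ ψ : B →ₗ[K] A, LocIndep rB rA φ φ → LocIndep rB rA ψ ψ →
      LocIndep rB rA φ ψ →
      (∀ c d : B, rB c d → φ (c * d) = φ c * φ d) →
      (∀ c d : B, rB c d → ψ (c * d) = ψ c * ψ d) →
      ∀ c d : B, rB c d → (locConv φ ψ) (c * d) = (locConv φ ψ) c * (locConv φ ψ) d) ∧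
    -- (2) the convolution inverse of a locality algebra homomorphism is again one
    (∀ φ ψ : B →ₗ[K] A, LocIndep rB rA φ φ →
      (∀ c d : B, rB c d → φ (c * d) = φ c * φ d) → φ 1 = 1 →
      locConv φ ψ = (Algebra.linearMap K A) ∘ₗ Coalgebra.counit →
      locConv ψ φ = (Algebra.linearMap K A) ∘ₗ Coalgebra.counit →
      (LocIndep rB rA ψ ψ ∧
        (∀ c d : B, rB c d → ψ (c * d) = ψ c * ψ d) ∧ ψ 1 = 1)) := by
  constructor
  · intro φ ψ hφφ hψψ hφψind hφm hψm c d hcd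
    exact S19.part1 rB hsymB hΔ φ ψ hφm hψm c d hcd
  · intro φ ψ hφφ hφm hφ1 hφψ hψφ
    have hφψ' : locConv φ ψ = (S19.eB : B →ₗ[K] A) := hφψ
    have hψφ' : locConv ψ φ = (S19.eB : B →ₗ[K] A) := hψφ
    have hconn0 : ∀ (n : ℕ) (c : B), c ∈ Bgr n →
        Coalgebra.comul (R := K) c ∈ Submodule.span K
          {t : B ⊗[K] B | ∃ (p q : ℕ) (a b : B), p + q = n ∧ a ∈ Bgr p ∧ b ∈ Bgr q ∧
            t = a ⊗ₜ[K] b} := by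
      intro n c hc
      have h := hconn ∅ n c hc (by simp)
      refine Submodule.span_mono ?_ h
      rintro t ⟨p, q, a, b, hpq, hap, hbq, -, -, -, rfl⟩
      exact ⟨p, q, a, b, hpq, hap, hbq, rfl⟩
    refine ⟨?_, ?_, ?_⟩
    · intro c d hcd
      obtain ⟨N₁, h₁⟩ := S19.psi_repr Bgr hinternal hB0 hconn0 φ ψ hφ1 hφψ' c
      obtain ⟨N₂, h₂⟩ := S19.psi_repr Bgr hinternal hB0 hconn0 φ ψ hφ1 hφψ' d
      rw [h₁ (max N₁ N₂) (le_max_left _ _), h₂ (max N₁ N₂) (le_max_right _ _)]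
      apply S19.rA_sum rA hzeroA haddA
      intro j hj
      apply hsymA
      apply S19.rA_sum rA hzeroA haddA
      intro k hk
      exact hsymA _ _
        (S19.L2 rB rA hsymB hsymA hzeroA haddA hsmulA hcompatA honeA hΔ φ hφφ k j c d hcd)
    · exact S19.part2_mult rB hsymB hΔ φ ψ hφm hφψ' hψφ'
    · exact S19.psi_one φ ψ hψφ' hφ1
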